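/- For cyclic codes C_1, ..., C_t of length n over a field F with gcd(n, char F)=1, dim(C_1 + ... + C_t) = Σ dim(C_i) - Σ_{i<j} dim(C_i ∩ C_j) + Σ_{i<j<k} dim(C_i ∩ C_j ∩ C_k) - ... + (-1)^{t-1} dim(C_1 ∩ ... ∩ C_t). -/

import Mathlib

section AssocDistrib
variable {α : Type*} [CommMonoidWithZero α] [UniqueFactorizationMonoid α] [Nontrivial α]

theorem assoc_inf_sup (a b c : Associates α) : a ⊓ (b ⊔ c) = (a ⊓ b) ⊔ (a ⊓ c) := by
  classical
  have hsup : ∀ x y : Associates α, (x ⊔ y).factors = x.factors ⊔ y.factors := fun x y =>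
    Associates.prod_factors _
  have hinf : ∀ x y : Associates α, (x ⊓ y).factors = x.factors ⊓ y.factors := fun x y =>
    Associates.prod_factors _
  have h : (a ⊓ (b ⊔ c)).factors = ((a ⊓ b) ⊔ (a ⊓ c)).factors := by
    rw [hinf, hsup, hsup, hinf, hinf, inf_sup_left]
  calc a ⊓ (b ⊔ c) = (a ⊓ (b ⊔ c)).factors.prod := (Associates.factors_prod _).symm
  _ = ((a ⊓ b) ⊔ (a ⊓ c)).factors.prod := by rw [h]
  _ = _ := Associates.factors_prod _

noncomputable instance : DistribLattice (Associates α) :=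
  DistribLattice.ofInfSupLe fun a b c => (assoc_inf_sup a b c).le
end AssocDistrib

section PID
variable {R : Type*} [CommRing R] [IsDomain R] [IsPrincipalIdealRing R]

/-- Ideals of a PID, ordered, are anti-isomorphic to `Associates R`. -/
noncomputable def pidIdealOrderIso : (Associates R)ᵒᵈ ≃o Ideal R where
  toEquiv := (OrderDual.ofDual.trans (Ideal.associatesEquivIsPrincipal R)).trans
    (Equiv.subtypeUnivEquiv fun I => IsPrincipalIdealRing.principal I)
  map_rel_iff' := by
    rintro x y
    induction x using OrderDual.rec with | _ x =>
    induction y using OrderDual.rec with | _ y =>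
    induction x using Quotient.inductionOn with | _ a =>
    induction y using Quotient.inductionOn with | _ b =>
    show (Ideal.span {a} : Ideal R) ≤ Ideal.span {b} ↔ _
    rw [Ideal.span_singleton_le_span_singleton]
    exact (Associates.mk_le_mk_iff_dvd).symm

theorem pid_inf_sup [Nontrivial R] (I J K : Ideal R) : I ⊓ (J ⊔ K) = (I ⊓ J) ⊔ (I ⊓ K) := by
  classical
  obtain ⟨x, rfl⟩ := pidIdealOrderIso.surjective I
  obtain ⟨y, rfl⟩ := pidIdealOrderIso.surjective J
  obtain ⟨z, rfl⟩ := pidIdealOrderIso.surjective K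
  simp only [← OrderIso.map_sup, ← OrderIso.map_inf]
  rw [inf_sup_left]
end PID


section Quot
variable {R S : Type*} [CommRing R] [CommRing S]

theorem comap_sup_of_surj (f : R →+* S) (hf : Function.Surjective f) (I J : Ideal S) :
    Ideal.comap f (I ⊔ J) = Ideal.comap f I ⊔ Ideal.comap f J := by
  refine le_antisymm ?_ (sup_le (Ideal.comap_mono le_sup_left) (Ideal.comap_mono le_sup_right))
  intro x hx
  rw [Ideal.mem_comap] at hx
  obtain ⟨a, ha, b, hb, hab⟩ := Submodule.mem_sup.mp hx
  obtain ⟨a', ha'⟩ := hf a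
  obtain ⟨b', hb'⟩ := hf b
  have h1 : a' ∈ Ideal.comap f I := by rw [Ideal.mem_comap, ha']; exact ha
  have h2 : x - a' - b' ∈ Ideal.comap f I := by
    have : f (x - a' - b') = 0 := by rw [map_sub, map_sub, ha', hb', ← hab]; ring
    rw [Ideal.mem_comap, this]; exact I.zero_mem
  have hb'' : b' ∈ Ideal.comap f J := by rw [Ideal.mem_comap, hb']; exact hb
  have : x = (a' + (x - a' - b')) + b' := by ring
  rw [this]
  exact Submodule.mem_sup.mpr ⟨_, Ideal.add_mem _ h1 h2, _, hb'', rfl⟩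

theorem quot_inf_sup (f : R →+* S) (hf : Function.Surjective f)
    (hd : ∀ I J K : Ideal R, I ⊓ (J ⊔ K) = I ⊓ J ⊔ I ⊓ K)
    (I J K : Ideal S) : I ⊓ (J ⊔ K) = I ⊓ J ⊔ I ⊓ K := by
  have h : ∀ L : Ideal S, Ideal.map f (Ideal.comap f L) = L := fun L =>
    Ideal.map_comap_of_surjective f hf L
  calc I ⊓ (J ⊔ K) = Ideal.map f (Ideal.comap f (I ⊓ (J ⊔ K))) := (h _).symm
    _ = Ideal.map f ((Ideal.comap f I ⊓ Ideal.comap f J) ⊔ (Ideal.comap f I ⊓ Ideal.comap f K)) := by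
        rw [Ideal.comap_inf, comap_sup_of_surj f hf, hd]
    _ = Ideal.map f (Ideal.comap f (I ⊓ J)) ⊔ Ideal.map f (Ideal.comap f (I ⊓ K)) := by
        rw [Ideal.map_sup, Ideal.comap_inf, Ideal.comap_inf]
    _ = I ⊓ J ⊔ I ⊓ K := by rw [h, h]
end Quot

section RS
variable (F : Type*) {R M : Type*} [Semiring F] [Semiring R] [AddCommMonoid M]
  [Module R M] [Module F M] [SMul F R] [IsScalarTower F R M]

theorem rs_sup (p q : Submodule R M) :
    Submodule.restrictScalars F (p ⊔ q) =
      Submodule.restrictScalars F p ⊔ Submodule.restrictScalars F q := by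
  ext x
  simp only [Submodule.restrictScalars_mem, Submodule.mem_sup]

theorem rs_inf (p q : Submodule R M) :
    Submodule.restrictScalars F (p ⊓ q) =
      Submodule.restrictScalars F p ⊓ Submodule.restrictScalars F q := rfl
end RS


section IE
variable {L : Type*} [CompleteLattice L] {ι : Type*} [DecidableEq ι]

theorem sup_inf_distrib (hd : ∀ a b c : L, a ⊓ (b ⊔ c) = a ⊓ b ⊔ a ⊓ c)
    (c : L) (C : ι → L) (s : Finset ι) :
    c ⊓ s.sup C = s.sup fun i => c ⊓ C i := by
  classical
  induction s using Finset.induction_on with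
  | empty => simp
  | @insert a s ha ih => rw [Finset.sup_insert, hd, ih, Finset.sup_insert]

theorem inf_const_inf (c : L) (C : ι → L) {S : Finset ι} (hS : S.Nonempty) :
    (S.inf fun i => c ⊓ C i) = c ⊓ S.inf C := by
  classical
  refine le_antisymm (le_inf ?_ ?_) (Finset.le_inf fun i hi => inf_le_inf_left c (Finset.inf_le hi))
  · obtain ⟨a, ha⟩ := hS
    exact le_trans (Finset.inf_le ha) inf_le_left
  · exact Finset.le_inf fun i hi => le_trans (Finset.inf_le hi) inf_le_right

theorem incl_excl (hd : ∀ a b c : L, a ⊓ (b ⊔ c) = a ⊓ b ⊔ a ⊓ c)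
    (d : L → ℤ) (hbot : d ⊥ = 0)
    (hmod : ∀ a b : L, d (a ⊔ b) + d (a ⊓ b) = d a + d b)
    (s : Finset ι) (C : ι → L) :
    d (s.sup C) = ∑ S ∈ s.powerset.filter Finset.Nonempty,
      (-1 : ℤ) ^ (S.card + 1) * d (S.inf C) := by
  classical
  induction s using Finset.induction_on generalizing C with
  | empty => simpa [Finset.filter_singleton] using hbot
  | @insert a s h ih =>
    have hsplit : ∀ f : Finset ι → ℤ,
        (∑ S ∈ (insert a s).powerset.filter Finset.Nonempty, f S) =
          (∑ S ∈ s.powerset.filter Finset.Nonempty, f S) +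
          ∑ S ∈ s.powerset, f (insert a S) := by
      intro f
      rw [Finset.powerset_insert, Finset.filter_union, Finset.sum_union, ]
      · congr 1
        have himg : (s.powerset.image (insert a)).filter Finset.Nonempty
            = s.powerset.image (insert a) := by
          refine Finset.filter_true_of_mem fun S hS => ?_
          obtain ⟨T, _, rfl⟩ := Finset.mem_image.mp hS
          exact Finset.insert_nonempty _ _
        rw [himg, Finset.sum_image]
        intro x hx y hy hxy
        have hxa : a ∉ x := fun hax => h (Finset.mem_powerset.mp hx hax)
        have hya : a ∉ y := fun hay => h (Finset.mem_powerset.mp hy hay)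
        calc x = (insert a x).erase a := (Finset.erase_insert hxa).symm
          _ = (insert a y).erase a := by rw [hxy]
          _ = y := Finset.erase_insert hya
      · refine Finset.disjoint_filter_filter ?_
        rw [Finset.disjoint_left]
        intro S hS hS'
        obtain ⟨T, _, rfl⟩ := Finset.mem_image.mp hS'
        exact h (Finset.mem_powerset.mp hS (Finset.mem_insert_self a T))
    rw [hsplit]
    -- LHS
    rw [Finset.sup_insert]
    have hm := hmod (C a) (s.sup C)
    have hdist : C a ⊓ s.sup C = s.sup fun i => C a ⊓ C i := sup_inf_distrib hd _ _ _
    have key : d (C a ⊔ s.sup C) = d (C a) + d (s.sup C) - d (s.sup fun i => C a ⊓ C i) := by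
      rw [← hdist]; omega
    rw [key, ih C, ih (fun i => C a ⊓ C i)]
    -- now handle ∑ S ∈ s.powerset, f (insert a S)
    have hcard : ∀ S ∈ s.powerset, (insert a S).card = S.card + 1 := by
      intro S hS
      exact Finset.card_insert_of_notMem fun haS => h (Finset.mem_powerset.mp hS haS)
    have hinf : ∀ S ∈ s.powerset, (insert a S).inf C = C a ⊓ S.inf C := by
      intro S hS; rw [Finset.inf_insert]
    have hsum2 : (∑ S ∈ s.powerset, (-1 : ℤ) ^ ((insert a S).card + 1) * d ((insert a S).inf C))
        = ∑ S ∈ s.powerset, (-1 : ℤ) ^ S.card * d (C a ⊓ S.inf C) := by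
      refine Finset.sum_congr rfl fun S hS => ?_
      rw [hcard S hS, hinf S hS, pow_succ, pow_succ]
      ring
    rw [hsum2]
    have hps : s.powerset = insert (∅ : Finset ι) (s.powerset.filter Finset.Nonempty) := by
      ext S
      simp only [Finset.mem_insert, Finset.mem_filter, Finset.mem_powerset]
      constructor
      · intro hS
        rcases S.eq_empty_or_nonempty with rfl | hne
        · exact Or.inl rfl
        · exact Or.inr ⟨hS, hne⟩
      · rintro (rfl | ⟨hS, _⟩)
        · exact Finset.empty_subset s
        · exact hS
    have hnotmem : (∅ : Finset ι) ∉ s.powerset.filter Finset.Nonempty := by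
      simp [Finset.Nonempty]
    have hterm : ∀ S ∈ s.powerset.filter Finset.Nonempty,
        (-1 : ℤ) ^ S.card * d (C a ⊓ S.inf C)
          = -((-1 : ℤ) ^ (S.card + 1) * d (S.inf fun i => C a ⊓ C i)) := by
      intro S hS
      rw [inf_const_inf _ _ (Finset.mem_filter.mp hS).2, pow_succ]
      ring
    have hsum3 : (∑ S ∈ s.powerset, (-1 : ℤ) ^ S.card * d (C a ⊓ S.inf C))
        = d (C a) + ∑ S ∈ s.powerset.filter Finset.Nonempty,
            (-1 : ℤ) ^ S.card * d (C a ⊓ S.inf C) := by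
      conv_lhs => rw [hps]
      rw [Finset.sum_insert hnotmem]
      simp
    have hsum4 : (∑ S ∈ s.powerset.filter Finset.Nonempty,
          (-1 : ℤ) ^ S.card * d (C a ⊓ S.inf C))
        = -∑ S ∈ s.powerset.filter Finset.Nonempty,
            (-1 : ℤ) ^ (S.card + 1) * d (S.inf fun i => C a ⊓ C i) := by
      rw [← Finset.sum_neg_distrib]
      exact Finset.sum_congr rfl hterm
    rw [hsum3, hsum4]
    ring
end IE


open Polynomial

/-- For cyclic codes `C 1, ..., C t` of length `n` over a field `F` with
`gcd(n, char F) = 1`, viewed as `F`-subspaces,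
`dim(C 1 + ... + C t) = Σ_{∅ ≠ S ⊆ {1..t}} (-1)^{|S|+1} dim(⋂_{i ∈ S} C i)`. -/
theorem stmt14 {F : Type*} [Field F] (n t : ℕ) (hn : 0 < n)
    (hchar : Nat.Coprime n (ringChar F))
    (C : Fin t → Ideal (AdjoinRoot ((X : F[X]) ^ n - 1))) :
    (Module.finrank F (Submodule.restrictScalars F (⨆ i, C i)) : ℤ) =
      ∑ S ∈ Finset.univ.powerset.filter Finset.Nonempty,
        (-1 : ℤ) ^ (S.card + 1) *
          (Module.finrank F (Submodule.restrictScalars F (⨅ i ∈ S, C i)) : ℤ) := by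
  classical
  set R := AdjoinRoot ((X : F[X]) ^ n - 1) with hR
  have hfin : FiniteDimensional F R := by
    have hf : ((X : F[X]) ^ n - 1) ≠ 0 := by
      have := Polynomial.monic_X_pow_sub_C (1 : F) hn.ne'
      rw [map_one] at this
      exact this.ne_zero
    exact (AdjoinRoot.powerBasis hf).finite
  set d : Ideal R → ℤ :=
    fun I => (Module.finrank F (Submodule.restrictScalars F I) : ℤ) with hd_def
  have hd : ∀ I J K : Ideal R, I ⊓ (J ⊔ K) = I ⊓ J ⊔ I ⊓ K :=
    quot_inf_sup (AdjoinRoot.mk _) (AdjoinRoot.mk_surjective) pid_inf_sup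
  have hbot : d ⊥ = 0 := by
    simp only [hd_def]; rw [Submodule.restrictScalars_bot]; simp
  have hmod : ∀ I J : Ideal R, d (I ⊔ J) + d (I ⊓ J) = d I + d J := by
    intro I J
    simp only [hd_def]
    rw [rs_sup F I J, rs_inf F I J]
    exact_mod_cast Submodule.finrank_sup_add_finrank_inf_eq
      (Submodule.restrictScalars F I) (Submodule.restrictScalars F J)
  have h := incl_excl hd d hbot hmod Finset.univ C
  rw [Finset.sup_univ_eq_iSup] at h
  simp only [hd_def] at h
  rw [h]
  refine Finset.sum_congr rfl fun S _ => ?_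
  rw [Finset.inf_eq_iInf]
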